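/- The coupled 4D standard map satisfies the generalized conformal symplectic identity: let W : ℝ² → ℝ be twice continuously differentiable, let λ₁, λ₂, μ₁, μ₂, ε ∈ ℝ, and let F : ℝ⁴ → ℝ⁴ (coordinates ordered (y,x,w,z)) be given by y' = λ₁y + μ₁ + ε ∂W/∂x(x,z), x' = x + y', w' = λ₂w + μ₂ + ε ∂W/∂z(x,z), z' = z + w'. Then F is differentiable, and at every point its Jacobian matrix D satisfies Dᵀ · J · D = diag(λ₁ J₂, λ₂ J₂), where J₂ = [[0,1],[−1,0]] and J = diag(J₂, J₂) is the block-diagonal matrix with blocks J₂ acting on the (y,x) and (w,z) pairs. In particular, when λ₁ = λ₂ = 1 the map F is symplectic. -/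

import Mathlib

open Matrix

set_option maxHeartbeats 1000000 in
/-- The coupled 4D standard map satisfies the generalized conformal symplectic identity;
in particular it is symplectic when both conformal factors equal 1. -/
theorem coupled_4D_standard_map_conformal_identity
    (W : ℝ × ℝ → ℝ) (hW : ContDiff ℝ 2 W) (l₁ l₂ μ₁ μ₂ ε : ℝ) :
    let Wx : ℝ × ℝ → ℝ := fun q => fderiv ℝ W q (1, 0)
    let Wz : ℝ × ℝ → ℝ := fun q => fderiv ℝ W q (0, 1)
    let F : (Fin 4 → ℝ) → (Fin 4 → ℝ) := fun p =>
      ![l₁ * p 0 + μ₁ + ε * Wx (p 1, p 3),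
        p 1 + (l₁ * p 0 + μ₁ + ε * Wx (p 1, p 3)),
        l₂ * p 2 + μ₂ + ε * Wz (p 1, p 3),
        p 3 + (l₂ * p 2 + μ₂ + ε * Wz (p 1, p 3))]
    -- block-diagonal symplectic matrix J = diag(J₂, J₂) with J₂ = [[0,1],[-1,0]]
    let J : Matrix (Fin 4) (Fin 4) ℝ :=
      !![0, 1, 0, 0; -1, 0, 0, 0; 0, 0, 0, 1; 0, 0, -1, 0]
    -- diag(λ₁ J₂, λ₂ J₂)
    let JΛ : Matrix (Fin 4) (Fin 4) ℝ :=
      !![0, l₁, 0, 0; -l₁, 0, 0, 0; 0, 0, 0, l₂; 0, 0, -l₂, 0]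
    (∀ p : Fin 4 → ℝ, ∃ D : Matrix (Fin 4) (Fin 4) ℝ,
      HasFDerivAt F (LinearMap.toContinuousLinearMap (Matrix.mulVecLin D)) p ∧
      Dᵀ * J * D = JΛ) ∧
    (l₁ = 1 → l₂ = 1 →
      ∀ p : Fin 4 → ℝ, ∃ D : Matrix (Fin 4) (Fin 4) ℝ,
        HasFDerivAt F (LinearMap.toContinuousLinearMap (Matrix.mulVecLin D)) p ∧
        Dᵀ * J * D = J) := by
  intro Wx Wz F J JΛ
  have key : ∀ p : Fin 4 → ℝ, ∃ D : Matrix (Fin 4) (Fin 4) ℝ,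
      HasFDerivAt F (LinearMap.toContinuousLinearMap (Matrix.mulVecLin D)) p ∧
      Dᵀ * J * D = JΛ := by
    intro p
    set q : ℝ × ℝ := (p 1, p 3) with hq
    have hW1 : ContDiff ℝ 1 (fderiv ℝ W) := hW.fderiv_right (by norm_num)
    set f'' : (ℝ × ℝ) →L[ℝ] (ℝ × ℝ) →L[ℝ] ℝ := fderiv ℝ (fderiv ℝ W) q with hf''def
    have hf'' : HasFDerivAt (fderiv ℝ W) f'' q :=
      ((hW1.differentiable one_ne_zero) q).hasFDerivAt
    have hsym : ∀ v w : ℝ × ℝ, f'' v w = f'' w v := by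
      intro v w
      exact (hW.contDiffAt.isSymmSndFDerivAt (by norm_num)) v w
    -- derivatives of Wx and Wz at q
    set Bx : (ℝ × ℝ) →L[ℝ] ℝ :=
      (ContinuousLinearMap.apply ℝ ℝ ((1 : ℝ), (0 : ℝ))).comp f'' with hBx
    set Bz : (ℝ × ℝ) →L[ℝ] ℝ :=
      (ContinuousLinearMap.apply ℝ ℝ ((0 : ℝ), (1 : ℝ))).comp f'' with hBz
    have hWx : HasFDerivAt Wx Bx q :=
      (ContinuousLinearMap.apply ℝ ℝ ((1 : ℝ), (0 : ℝ))).hasFDerivAt.comp q hf''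
    have hWz : HasFDerivAt Wz Bz q :=
      (ContinuousLinearMap.apply ℝ ℝ ((0 : ℝ), (1 : ℝ))).hasFDerivAt.comp q hf''
    -- the linear projection p ↦ (p 1, p 3)
    set g : (Fin 4 → ℝ) →L[ℝ] ℝ × ℝ :=
      (ContinuousLinearMap.proj 1).prod (ContinuousLinearMap.proj 3) with hg
    have hgp : HasFDerivAt (fun p : Fin 4 → ℝ => ((p 1, p 3) : ℝ × ℝ)) g p :=
      g.hasFDerivAt
    have hWxg : HasFDerivAt (fun p : Fin 4 → ℝ => Wx (p 1, p 3)) (Bx.comp g) p :=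
      by have := hWx.comp p hgp; exact this
    have hWzg : HasFDerivAt (fun p : Fin 4 → ℝ => Wz (p 1, p 3)) (Bz.comp g) p :=
      by have := hWz.comp p hgp; exact this
    -- coordinate derivatives
    set L0 : (Fin 4 → ℝ) →L[ℝ] ℝ :=
      l₁ • (ContinuousLinearMap.proj 0) + ε • (Bx.comp g) with hL0
    set L2 : (Fin 4 → ℝ) →L[ℝ] ℝ :=
      l₂ • (ContinuousLinearMap.proj 2) + ε • (Bz.comp g) with hL2
    have h0 : HasFDerivAt (fun p : Fin 4 → ℝ => l₁ * p 0 + μ₁ + ε * Wx (p 1, p 3)) L0 p := by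
      exact (((hasFDerivAt_apply 0 p).const_mul l₁).add_const μ₁).add (hWxg.const_mul ε)
    have h2 : HasFDerivAt (fun p : Fin 4 → ℝ => l₂ * p 2 + μ₂ + ε * Wz (p 1, p 3)) L2 p := by
      exact (((hasFDerivAt_apply 2 p).const_mul l₂).add_const μ₂).add (hWzg.const_mul ε)
    have h1 : HasFDerivAt
        (fun p : Fin 4 → ℝ => p 1 + (l₁ * p 0 + μ₁ + ε * Wx (p 1, p 3)))
        ((ContinuousLinearMap.proj 1) + L0) p :=
      (hasFDerivAt_apply 1 p).add h0
    have h3 : HasFDerivAt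
        (fun p : Fin 4 → ℝ => p 3 + (l₂ * p 2 + μ₂ + ε * Wz (p 1, p 3)))
        ((ContinuousLinearMap.proj 3) + L2) p :=
      (hasFDerivAt_apply 3 p).add h2
    set Φ' : (Fin 4 → ℝ) →L[ℝ] (Fin 4 → ℝ) :=
      ContinuousLinearMap.pi ![L0, (ContinuousLinearMap.proj 1) + L0, L2,
        (ContinuousLinearMap.proj 3) + L2] with hΦ'
    have hF : HasFDerivAt F Φ' p := by
      apply hasFDerivAt_pi.2
      intro i
      fin_cases i
      · exact h0
      · exact h1
      · exact h2
      · exact h3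
    -- abbreviations for second partials
    set a : ℝ := f'' (1, 0) (1, 0) with ha
    set b : ℝ := f'' (0, 1) (1, 0) with hb
    set d : ℝ := f'' (0, 1) (0, 1) with hd
    have hc : f'' (1, 0) (0, 1) = b := hsym _ _
    set M : Matrix (Fin 4) (Fin 4) ℝ :=
      !![l₁, ε * a, 0, ε * b;
         l₁, 1 + ε * a, 0, ε * b;
         0, ε * b, l₂, ε * d;
         0, ε * b, l₂, 1 + ε * d] with hM
    have hexp : ∀ u : ℝ × ℝ, ∀ w : ℝ × ℝ,
        f'' u w = u.1 * f'' (1, 0) w + u.2 * f'' (0, 1) w := by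
      intro u w
      have hu : u = u.1 • ((1 : ℝ), (0 : ℝ)) + u.2 • ((0 : ℝ), (1 : ℝ)) := by
        ext <;> simp
      have h2 : f'' u = u.1 • f'' (1, 0) + u.2 • f'' (0, 1) := by
        conv_lhs => rw [hu]
        rw [f''.map_add, f''.map_smul, f''.map_smul]
      rw [h2]
      simp only [ContinuousLinearMap.add_apply, ContinuousLinearMap.coe_smul',
        Pi.smul_apply, smul_eq_mul]
    refine ⟨M, ?_, ?_⟩
    · have hCLM : LinearMap.toContinuousLinearMap (Matrix.mulVecLin M) = Φ' := by
        apply ContinuousLinearMap.ext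
        intro v
        funext i
        have e1 : Bx (g v) = v 1 * a + v 3 * b := hexp (v 1, v 3) ((1 : ℝ), (0 : ℝ))
        have e2 : Bz (g v) = v 1 * b + v 3 * d := by
          have h := hexp (v 1, v 3) ((0 : ℝ), (1 : ℝ))
          rw [hc] at h
          exact h
        have lhs : ∀ j : Fin 4, LinearMap.toContinuousLinearMap (Matrix.mulVecLin M) v j =
            M j 0 * v 0 + M j 1 * v 1 + M j 2 * v 2 + M j 3 * v 3 := by
          intro j
          show Matrix.mulVec M v j = _
          simp only [Matrix.mulVec, dotProduct, Fin.sum_univ_four]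
        have eL0 : L0 v = l₁ * v 0 + ε * (v 1 * a + v 3 * b) := by
          rw [hL0]
          simp only [ContinuousLinearMap.add_apply, ContinuousLinearMap.coe_smul',
            Pi.smul_apply, ContinuousLinearMap.proj_apply, ContinuousLinearMap.coe_comp',
            Function.comp_apply, smul_eq_mul]
          rw [e1]
        have eL2 : L2 v = l₂ * v 2 + ε * (v 1 * b + v 3 * d) := by
          rw [hL2]
          simp only [ContinuousLinearMap.add_apply, ContinuousLinearMap.coe_smul',
            Pi.smul_apply, ContinuousLinearMap.proj_apply, ContinuousLinearMap.coe_comp',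
            Function.comp_apply, smul_eq_mul]
          rw [e2]
        fin_cases i
        · show LinearMap.toContinuousLinearMap (Matrix.mulVecLin M) v 0 = L0 v
          rw [lhs 0, eL0]
          show l₁ * v 0 + ε * a * v 1 + 0 * v 2 + ε * b * v 3 = _
          ring
        · show LinearMap.toContinuousLinearMap (Matrix.mulVecLin M) v 1 = v 1 + L0 v
          rw [lhs 1, eL0]
          show l₁ * v 0 + (1 + ε * a) * v 1 + 0 * v 2 + ε * b * v 3 = _
          ring
        · show LinearMap.toContinuousLinearMap (Matrix.mulVecLin M) v 2 = L2 v
          rw [lhs 2, eL2]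
          show 0 * v 0 + ε * b * v 1 + l₂ * v 2 + ε * d * v 3 = _
          ring
        · show LinearMap.toContinuousLinearMap (Matrix.mulVecLin M) v 3 = v 3 + L2 v
          rw [lhs 3, eL2]
          show 0 * v 0 + ε * b * v 1 + l₂ * v 2 + (1 + ε * d) * v 3 = _
          ring
      rw [hCLM]
      exact hF
    · show Mᵀ * !![0, 1, 0, 0; -1, 0, 0, 0; 0, 0, 0, 1; 0, 0, -1, 0] * M =
        !![0, l₁, 0, 0; -l₁, 0, 0, 0; 0, 0, 0, l₂; 0, 0, -l₂, 0]
      rw [hM]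
      have htr : (!![l₁, ε * a, 0, ε * b;
         l₁, 1 + ε * a, 0, ε * b;
         0, ε * b, l₂, ε * d;
         0, ε * b, l₂, 1 + ε * d] : Matrix (Fin 4) (Fin 4) ℝ)ᵀ =
        !![l₁, l₁, 0, 0;
           ε * a, 1 + ε * a, ε * b, ε * b;
           0, 0, l₂, l₂;
           ε * b, ε * b, ε * d, 1 + ε * d] := by
        ext i j
        fin_cases i <;> fin_cases j <;> rfl
      rw [htr]
      ext i j
      fin_cases i <;> fin_cases j <;>
        simp [Matrix.mul_apply, Fin.sum_univ_four, Matrix.vecHead, Matrix.vecTail] <;> ring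
  refine ⟨key, ?_⟩
  intro hl1 hl2 p
  obtain ⟨D, hD, hJ⟩ := key p
  refine ⟨D, hD, ?_⟩
  rw [hJ]
  subst hl1 hl2
  rfl
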